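/- Let p > 3 be a prime. Then \sum_{k=0}^{\lfloor p/3 \rfloor} (3k)!/(27^k k!^3) \equiv \left(\frac{p}{3}\right) \pmod{p}, where \left(\frac{p}{3}\right) is the Legendre symbol (equal to 1 if p \equiv 1 mod 3 and -1 if p \equiv 2 mod 3). -/

import Mathlib

open Finset

/-- `a ≡ b (mod p^k)` as rationals: `a - b` is `p^k` times a `p`-integral rational. -/
def ratCongr (p k : ℕ) (a b : ℚ) : Prop :=
  ∃ c : ℚ, a - b = (p : ℚ) ^ k * c ∧ ¬ (p ∣ c.den)

instance : Fact (Nat.Prime 3) := ⟨by norm_num⟩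


lemma cc_fact (k : ℕ) :
    (3*k).choose k * (2*k).choose k * (k.factorial)^3 = (3*k).factorial := by
  have h1 := Nat.choose_mul_factorial_mul_factorial (show k ≤ 3*k by omega)
  have h2 := Nat.choose_mul_factorial_mul_factorial (show k ≤ 2*k by omega)
  have e1 : 3*k - k = 2*k := by omega
  have e2 : 2*k - k = k := by omega
  rw [e1] at h1; rw [e2] at h2
  calc (3*k).choose k * (2*k).choose k * (k.factorial)^3
      = ((3*k).choose k * k.factorial) * ((2*k).choose k * k.factorial * k.factorial) := by ring
    _ = ((3*k).choose k * k.factorial) * (2*k).factorial := by rw [h2]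
    _ = (3*k).factorial := h1

lemma vand (m : ℕ) :
    ∑ k ∈ range (m+1), m.choose k * (2*m).choose k = (3*m).choose m := by
  have h := Nat.add_choose_eq (2*m) m m
  rw [Finset.Nat.sum_antidiagonal_eq_sum_range_succ_mk] at h
  have e : 2*m + m = 3*m := by ring
  rw [e] at h
  rw [h]
  refine Finset.sum_congr rfl fun k hk => ?_
  have hk' : k ≤ m := by simpa using Nat.lt_succ_iff.mp (mem_range.mp hk)
  rw [Nat.choose_symm hk', mul_comm]

lemma innerAltSum (m j : ℕ) (hj : j ≤ m) :
    ∑ k ∈ range (m+1), (-1:ℤ)^k * (m.choose k) * (k.choose j)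
      = if j = m then (-1:ℤ)^m else 0 := by
  rw [range_eq_Ico, ← Finset.sum_Ico_consecutive _ (Nat.zero_le j) (by omega : j ≤ m+1)]
  have h0 : ∑ k ∈ Ico 0 j, (-1:ℤ)^k * (m.choose k) * (k.choose j) = 0 := by
    apply Finset.sum_eq_zero
    intro k hk
    have : k < j := (mem_Ico.mp hk).2
    rw [Nat.choose_eq_zero_of_lt this]; simp
  rw [h0, zero_add, Finset.sum_Ico_eq_sum_range]
  have e : m + 1 - j = (m - j) + 1 := by omega
  rw [e]
  have hstep : ∀ i ∈ range ((m-j)+1),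
      (-1:ℤ)^(j+i) * (m.choose (j+i)) * ((j+i).choose j)
        = (-1:ℤ)^j * (m.choose j) * ((-1:ℤ)^i * ((m-j).choose i)) := by
    intro i hi
    have hi' : i ≤ m - j := Nat.lt_succ_iff.mp (mem_range.mp hi)
    have h1 : m.choose (j+i) * (j+i).choose j = m.choose j * (m-j).choose i := by
      have := Nat.choose_mul (n := m) (show j ≤ j+i by omega)
      simpa [Nat.add_sub_cancel_left] using this
    have : ((m.choose (j+i) : ℤ)) * ((j+i).choose j) = (m.choose j : ℤ) * ((m-j).choose i) := by
      exact_mod_cast congrArg (Nat.cast : ℕ → ℤ) h1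
    rw [pow_add]
    linear_combination ((-1:ℤ)^j * (-1:ℤ)^i) * this
  rw [Finset.sum_congr rfl hstep, ← Finset.mul_sum, Int.alternating_sum_range_choose]
  by_cases h : j = m
  · subst h; simp
  · have : m - j ≠ 0 := by omega
    rw [if_neg this, if_neg h, mul_zero]

lemma identH (m : ℕ) :
    ∑ k ∈ range (m+1), (-1:ℤ)^k * (m.choose k) * ((m+k).choose k) = (-1:ℤ)^m := by
  have key : ∀ k : ℕ, ((m+k).choose k : ℤ)
      = ∑ j ∈ range (m+1), ((m.choose j : ℤ) * (k.choose (m-j) : ℤ)) := by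
    intro k
    have h0 : (m+k).choose k = (m+k).choose m := by
      have := Nat.choose_symm (Nat.le_add_right m k)
      rwa [Nat.add_sub_cancel_left] at this
    have h := Nat.add_choose_eq m k m
    rw [Finset.Nat.sum_antidiagonal_eq_sum_range_succ_mk] at h
    rw [h0, h]; push_cast; ring
  calc ∑ k ∈ range (m+1), (-1:ℤ)^k * (m.choose k) * ((m+k).choose k)
      = ∑ k ∈ range (m+1), ∑ j ∈ range (m+1),
          (m.choose j : ℤ) * ((-1:ℤ)^k * (m.choose k) * (k.choose (m-j))) := by
        refine Finset.sum_congr rfl fun k _ => ?_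
        rw [key k, Finset.mul_sum]
        refine Finset.sum_congr rfl fun j _ => by ring
    _ = ∑ j ∈ range (m+1), (m.choose j : ℤ) *
          (∑ k ∈ range (m+1), (-1:ℤ)^k * (m.choose k) * (k.choose (m-j))) := by
        rw [Finset.sum_comm]
        refine Finset.sum_congr rfl fun j _ => by rw [Finset.mul_sum]
    _ = (-1:ℤ)^m := by
        rw [Finset.sum_eq_single 0]
        · rw [innerAltSum m (m-0) (by omega)]
          simp
        · intro j hj hj0
          have hj' : j ≤ m := Nat.lt_succ_iff.mp (mem_range.mp hj)
          rw [innerAltSum m (m-j) (by omega), if_neg (by omega), mul_zero]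
        · intro h; exact absurd (mem_range.mpr (by omega)) h


section
variable {p : ℕ} [hfp : Fact p.Prime]

lemma fac_ne_zero {n : ℕ} (h : n < p) : ((n.factorial : ℕ) : ZMod p) ≠ 0 := by
  rw [Ne, ZMod.natCast_eq_zero_iff]
  intro hd
  exact absurd ((Nat.Prime.dvd_factorial hfp.out).mp hd) (by omega)

lemma choosep1 : ∀ k, k < p → (((p-1).choose k : ℕ) : ZMod p) = (-1:ZMod p)^k := by
  intro k
  induction k with
  | zero => intro _; simp
  | succ k ih =>
    intro hk1
    have ih' := ih (by omega)
    have hp1 : 1 ≤ p := hfp.out.one_lt.le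
    have h3 := Nat.choose_succ_right_eq (p-1) k
    have h4 : (((p-1).choose (k+1) : ℕ) : ZMod p) * ((k+1 : ℕ) : ZMod p)
        = (((p-1).choose k : ℕ) : ZMod p) * (((p-1-k : ℕ)) : ZMod p) := by
      rw [← Nat.cast_mul, ← Nat.cast_mul, h3]
    have h5 : (((p-1-k : ℕ)) : ZMod p) = -(((k+1 : ℕ)) : ZMod p) := by
      have hnat : (p-1-k) + (k+1) = p := by omega
      have h := congrArg (Nat.cast : ℕ → ZMod p) hnat
      rw [Nat.cast_add, ZMod.natCast_self] at h
      exact eq_neg_of_add_eq_zero_left h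
    have h6 : ((k+1 : ℕ) : ZMod p) ≠ 0 := by
      rw [Ne, ZMod.natCast_eq_zero_iff]
      intro hd
      exact absurd (Nat.le_of_dvd (by omega) hd) (by omega)
    apply mul_right_cancel₀ h6
    rw [h4, h5, ih']
    ring

lemma C1 {m : ℕ} (hpm : p = 3*m+1) :
    ∀ k, k ≤ m →
      (((3*k).factorial : ℕ) : ZMod p) * (((m-k).factorial : ℕ) : ZMod p)
          * (((2*m-k).factorial : ℕ) : ZMod p)
        = 27^k * ((m.factorial : ℕ) : ZMod p) * (((2*m).factorial : ℕ) : ZMod p)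
          * ((k.factorial : ℕ) : ZMod p) := by
  intro k
  induction k with
  | zero => intro _; simp
  | succ k ih =>
    intro hk1
    have hk : k ≤ m := by omega
    have hk2 : k ≤ 2*m := by omega
    have ih' := ih hk
    have hP : 3*((m : ℕ) : ZMod p) + 1 = 0 := by
      have h := congrArg (Nat.cast : ℕ → ZMod p) hpm
      rw [ZMod.natCast_self] at h
      push_cast at h
      linear_combination -h
    have e1 : (m-k).factorial = (m-k) * ((m-(k+1)).factorial) := by
      rw [show m-k = (m-(k+1))+1 from by omega, Nat.factorial_succ]
    have e2 : (2*m-k).factorial = (2*m-k) * ((2*m-(k+1)).factorial) := by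
      rw [show 2*m-k = (2*m-(k+1))+1 from by omega, Nat.factorial_succ]
    rw [e1, e2] at ih'
    rw [show 3*(k+1) = 3*k+1+1+1 from by ring, Nat.factorial_succ (3*k+1+1),
      Nat.factorial_succ (3*k+1), Nat.factorial_succ (3*k), Nat.factorial_succ k]
    push_cast [Nat.cast_sub hk, Nat.cast_sub hk2] at ih' ⊢
    linear_combination (27*(((k:ZMod p))+1)) * ih' +
      (3*(((k:ZMod p))+1)*(-6*((m:ZMod p))+9*((k:ZMod p))+2)
        * (((3*k).factorial : ℕ) : ZMod p) * (((m-(k+1)).factorial : ℕ) : ZMod p)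
        * (((2*m-(k+1)).factorial : ℕ) : ZMod p)) * hP

lemma E2 {m : ℕ} (hpm : p = 3*m+2) :
    ∀ k, k ≤ m →
      (((3*k).factorial : ℕ) : ZMod p) * ((m.factorial : ℕ) : ZMod p)
          * (((2*m+1).factorial : ℕ) : ZMod p)
        = 27^k * ((k.factorial : ℕ) : ZMod p) * (((m+k).factorial : ℕ) : ZMod p)
          * (((2*m+1+k).factorial : ℕ) : ZMod p) := by
  intro k
  induction k with
  | zero => intro _; simp
  | succ k ih =>
    intro hk1
    have hk : k ≤ m := by omega
    have ih' := ih hk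
    have hP : 3*((m : ℕ) : ZMod p) + 2 = 0 := by
      have h := congrArg (Nat.cast : ℕ → ZMod p) hpm
      rw [ZMod.natCast_self] at h
      push_cast at h
      linear_combination -h
    rw [show 3*(k+1) = 3*k+1+1+1 from by ring, Nat.factorial_succ (3*k+1+1),
      Nat.factorial_succ (3*k+1), Nat.factorial_succ (3*k), Nat.factorial_succ k,
      show m+(k+1) = (m+k)+1 from by ring, Nat.factorial_succ (m+k),
      show 2*m+1+(k+1) = (2*m+1+k)+1 from by ring, Nat.factorial_succ (2*m+1+k)]
    push_cast at ih' ⊢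
    linear_combination (27*(((k:ZMod p))+1)*(((m:ZMod p))+((k:ZMod p))+1)*(2*((m:ZMod p))+2+((k:ZMod p)))) * ih' +
      (3*(((k:ZMod p))+1)*(-6*((m:ZMod p))-9*((k:ZMod p))-8)
        * (((3*k).factorial : ℕ) : ZMod p) * ((m.factorial : ℕ) : ZMod p)
        * (((2*m+1).factorial : ℕ) : ZMod p)) * hP

lemma F2 {m : ℕ} (hpm : p = 3*m+2) :
    ∀ k, k ≤ m →
      (((2*m+1+k).factorial : ℕ) : ZMod p) * (((m-k).factorial : ℕ) : ZMod p)
        = (-1:ZMod p)^k * (((2*m+1).factorial : ℕ) : ZMod p) * ((m.factorial : ℕ) : ZMod p) := by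
  intro k
  induction k with
  | zero => intro _; simp
  | succ k ih =>
    intro hk1
    have hk : k ≤ m := by omega
    have ih' := ih hk
    have hP : 3*((m : ℕ) : ZMod p) + 2 = 0 := by
      have h := congrArg (Nat.cast : ℕ → ZMod p) hpm
      rw [ZMod.natCast_self] at h
      push_cast at h
      linear_combination -h
    have e1 : (m-k).factorial = (m-k) * ((m-(k+1)).factorial) := by
      rw [show m-k = (m-(k+1))+1 from by omega, Nat.factorial_succ]
    rw [e1] at ih'
    rw [show 2*m+1+(k+1) = (2*m+1+k)+1 from by ring, Nat.factorial_succ (2*m+1+k)]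
    push_cast [Nat.cast_sub hk] at ih' ⊢
    linear_combination (-1 : ZMod p) * ih' +
      ((((2*m+1+k).factorial : ℕ) : ZMod p) * (((m-(k+1)).factorial : ℕ) : ZMod p)) * hP

lemma D1 {m : ℕ} (hpm : p = 3*m+1) {k : ℕ} (hk : k ≤ m) :
    (((3*k).choose k * (2*k).choose k : ℕ) : ZMod p)
      = 27^k * ((m.choose k : ℕ) : ZMod p) * (((2*m).choose k : ℕ) : ZMod p) := by
  have hk2 : k ≤ 2*m := by omega
  have hU : (((k.factorial)^3 * (m-k).factorial * (2*m-k).factorial : ℕ) : ZMod p) ≠ 0 := by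
    push_cast
    exact mul_ne_zero (mul_ne_zero (pow_ne_zero _ (fac_ne_zero (by omega)))
      (fac_ne_zero (by omega))) (fac_ne_zero (by omega))
  apply mul_right_cancel₀ hU
  have nat1 : ((3*k).choose k * (2*k).choose k) * ((k.factorial)^3 * (m-k).factorial * (2*m-k).factorial)
      = (3*k).factorial * ((m-k).factorial * (2*m-k).factorial) := by rw [← cc_fact k]; ring
  have nat2 : (m.choose k * (2*m).choose k) * ((k.factorial)^3 * (m-k).factorial * (2*m-k).factorial)
      = m.factorial * ((2*m).factorial * k.factorial) := by
    calc (m.choose k * (2*m).choose k) * ((k.factorial)^3 * (m-k).factorial * (2*m-k).factorial)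
        = (m.choose k * k.factorial * (m-k).factorial)
            * ((2*m).choose k * k.factorial * (2*m-k).factorial) * k.factorial := by ring
      _ = m.factorial * ((2*m).factorial * k.factorial) := by
          rw [Nat.choose_mul_factorial_mul_factorial hk,
            Nat.choose_mul_factorial_mul_factorial hk2]; ring
  have hC := C1 hpm k hk
  have hn2 := congrArg (Nat.cast : ℕ → ZMod p) nat2
  push_cast at hn2
  calc (((3*k).choose k * (2*k).choose k : ℕ) : ZMod p)
        * (((k.factorial)^3 * (m-k).factorial * (2*m-k).factorial : ℕ) : ZMod p)
      = (((3*k).factorial * ((m-k).factorial * (2*m-k).factorial) : ℕ) : ZMod p) := by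
        rw [← Nat.cast_mul, nat1]
    _ = 27^k * ((m.factorial : ℕ) : ZMod p) * (((2*m).factorial : ℕ) : ZMod p)
          * ((k.factorial : ℕ) : ZMod p) := by push_cast; linear_combination hC
    _ = (27^k * ((m.choose k : ℕ) : ZMod p) * (((2*m).choose k : ℕ) : ZMod p))
          * (((k.factorial)^3 * (m-k).factorial * (2*m-k).factorial : ℕ) : ZMod p) := by
        push_cast
        linear_combination (-(27:ZMod p)^k) * hn2

lemma D2 {m : ℕ} (hpm : p = 3*m+2) {k : ℕ} (hk : k ≤ m) :
    (((3*k).choose k * (2*k).choose k : ℕ) : ZMod p)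
      = 27^k * (((m+k).choose k : ℕ) : ZMod p) * (((2*m+1+k).choose k : ℕ) : ZMod p) := by
  have hU : (((k.factorial)^3 * m.factorial * (2*m+1).factorial : ℕ) : ZMod p) ≠ 0 := by
    push_cast
    exact mul_ne_zero (mul_ne_zero (pow_ne_zero _ (fac_ne_zero (by omega)))
      (fac_ne_zero (by omega))) (fac_ne_zero (by omega))
  apply mul_right_cancel₀ hU
  have h1 := Nat.choose_mul_factorial_mul_factorial (Nat.le_add_left k m)
  rw [Nat.add_sub_cancel] at h1
  have h2 := Nat.choose_mul_factorial_mul_factorial (Nat.le_add_left k (2*m+1))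
  rw [Nat.add_sub_cancel] at h2
  have nat1 : ((3*k).choose k * (2*k).choose k) * ((k.factorial)^3 * m.factorial * (2*m+1).factorial)
      = (3*k).factorial * (m.factorial * (2*m+1).factorial) := by rw [← cc_fact k]; ring
  have nat2 : ((m+k).choose k * (2*m+1+k).choose k) * ((k.factorial)^3 * m.factorial * (2*m+1).factorial)
      = (m+k).factorial * ((2*m+1+k).factorial * k.factorial) := by
    calc ((m+k).choose k * (2*m+1+k).choose k) * ((k.factorial)^3 * m.factorial * (2*m+1).factorial)
        = ((m+k).choose k * k.factorial * m.factorial)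
            * ((2*m+1+k).choose k * k.factorial * (2*m+1).factorial) * k.factorial := by ring
      _ = (m+k).factorial * ((2*m+1+k).factorial * k.factorial) := by rw [h1, h2]; ring
  have hC := E2 hpm k hk
  have hn2 := congrArg (Nat.cast : ℕ → ZMod p) nat2
  push_cast at hn2
  calc (((3*k).choose k * (2*k).choose k : ℕ) : ZMod p)
        * (((k.factorial)^3 * m.factorial * (2*m+1).factorial : ℕ) : ZMod p)
      = (((3*k).factorial * (m.factorial * (2*m+1).factorial) : ℕ) : ZMod p) := by
        rw [← Nat.cast_mul, nat1]
    _ = 27^k * ((k.factorial : ℕ) : ZMod p) * (((m+k).factorial : ℕ) : ZMod p)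
          * (((2*m+1+k).factorial : ℕ) : ZMod p) := by push_cast; linear_combination hC
    _ = (27^k * (((m+k).choose k : ℕ) : ZMod p) * (((2*m+1+k).choose k : ℕ) : ZMod p))
          * (((k.factorial)^3 * m.factorial * (2*m+1).factorial : ℕ) : ZMod p) := by
        push_cast
        linear_combination (-(27:ZMod p)^k) * hn2

lemma G2 {m : ℕ} (hpm : p = 3*m+2) {k : ℕ} (hk : k ≤ m) :
    (((2*m+1+k).choose k : ℕ) : ZMod p) = (-1:ZMod p)^k * ((m.choose k : ℕ) : ZMod p) := by
  have hV : ((k.factorial * (m-k).factorial * (2*m+1).factorial : ℕ) : ZMod p) ≠ 0 := by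
    push_cast
    exact mul_ne_zero (mul_ne_zero (fac_ne_zero (by omega)) (fac_ne_zero (by omega)))
      (fac_ne_zero (by omega))
  apply mul_right_cancel₀ hV
  have h2 := Nat.choose_mul_factorial_mul_factorial (Nat.le_add_left k (2*m+1))
  rw [Nat.add_sub_cancel] at h2
  have nat1 : (2*m+1+k).choose k * (k.factorial * (m-k).factorial * (2*m+1).factorial)
      = (2*m+1+k).factorial * (m-k).factorial := by
    calc (2*m+1+k).choose k * (k.factorial * (m-k).factorial * (2*m+1).factorial)
        = ((2*m+1+k).choose k * k.factorial * (2*m+1).factorial) * (m-k).factorial := by ring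
      _ = (2*m+1+k).factorial * (m-k).factorial := by rw [h2]
  have nat2 : m.choose k * (k.factorial * (m-k).factorial * (2*m+1).factorial)
      = m.factorial * (2*m+1).factorial := by
    calc m.choose k * (k.factorial * (m-k).factorial * (2*m+1).factorial)
        = (m.choose k * k.factorial * (m-k).factorial) * (2*m+1).factorial := by ring
      _ = m.factorial * (2*m+1).factorial := by rw [Nat.choose_mul_factorial_mul_factorial hk]
  have hF := F2 hpm k hk
  have hn2 := congrArg (Nat.cast : ℕ → ZMod p) nat2
  push_cast at hn2
  calc (((2*m+1+k).choose k : ℕ) : ZMod p)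
        * ((k.factorial * (m-k).factorial * (2*m+1).factorial : ℕ) : ZMod p)
      = (((2*m+1+k).factorial * (m-k).factorial : ℕ) : ZMod p) := by rw [← Nat.cast_mul, nat1]
    _ = (-1:ZMod p)^k * (((2*m+1).factorial : ℕ) : ZMod p) * ((m.factorial : ℕ) : ZMod p) := by
        push_cast; linear_combination hF
    _ = ((-1:ZMod p)^k * ((m.choose k : ℕ) : ZMod p))
          * ((k.factorial * (m-k).factorial * (2*m+1).factorial : ℕ) : ZMod p) := by
        push_cast
        linear_combination (-(-1:ZMod p)^k) * hn2


lemma sum_case1 {m : ℕ} (hpm : p = 3*m+1) (hm : Even m) :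
    ((∑ k ∈ range (m+1), 27^(m-k) * ((3*k).choose k * (2*k).choose k) : ℕ) : ZMod p)
      = 27^m := by
  rw [Nat.cast_sum]
  have step : ∀ k ∈ range (m+1),
      ((27^(m-k) * ((3*k).choose k * (2*k).choose k) : ℕ) : ZMod p)
        = 27^m * ((m.choose k * (2*m).choose k : ℕ) : ZMod p) := by
    intro k hk
    have hk' : k ≤ m := Nat.lt_succ_iff.mp (mem_range.mp hk)
    have hD := D1 hpm hk'
    have h27 : ((27:ZMod p))^(m-k) * 27^k = 27^m := by
      rw [← pow_add]; congr 1; omega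
    push_cast at hD ⊢
    calc ((27:ZMod p))^(m-k) * ((((3*k).choose k : ℕ) : ZMod p) * (((2*k).choose k : ℕ) : ZMod p))
        = 27^(m-k) * (27^k * ((m.choose k : ℕ) : ZMod p) * (((2*m).choose k : ℕ) : ZMod p)) := by
          linear_combination ((27:ZMod p)^(m-k)) * hD
      _ = ((27:ZMod p)^(m-k) * 27^k) * (((m.choose k : ℕ) : ZMod p) * (((2*m).choose k : ℕ) : ZMod p)) := by
          ring
      _ = 27^m * (((m.choose k : ℕ) : ZMod p) * (((2*m).choose k : ℕ) : ZMod p)) := by rw [h27]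
  rw [Finset.sum_congr rfl step, ← Finset.mul_sum, ← Nat.cast_sum, vand m,
    show 3*m = p-1 from by omega, choosep1 m (by omega), hm.neg_one_pow, mul_one]

lemma sum_case2 {m : ℕ} (hpm : p = 3*m+2) (hm : Odd m) :
    ((∑ k ∈ range (m+1), 27^(m-k) * ((3*k).choose k * (2*k).choose k) : ℕ) : ZMod p)
      = -(27^m) := by
  rw [Nat.cast_sum]
  have step : ∀ k ∈ range (m+1),
      ((27^(m-k) * ((3*k).choose k * (2*k).choose k) : ℕ) : ZMod p)
        = 27^m * ((-1:ZMod p)^k * ((m.choose k : ℕ) : ZMod p) * (((m+k).choose k : ℕ) : ZMod p)) := by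
    intro k hk
    have hk' : k ≤ m := Nat.lt_succ_iff.mp (mem_range.mp hk)
    have hD := D2 hpm hk'
    have hG := G2 hpm hk'
    rw [hG] at hD
    have h27 : ((27:ZMod p))^(m-k) * 27^k = 27^m := by
      rw [← pow_add]; congr 1; omega
    push_cast at hD ⊢
    calc ((27:ZMod p))^(m-k) * ((((3*k).choose k : ℕ) : ZMod p) * (((2*k).choose k : ℕ) : ZMod p))
        = ((27:ZMod p)^(m-k) * 27^k) *
            ((-1:ZMod p)^k * ((m.choose k : ℕ) : ZMod p) * (((m+k).choose k : ℕ) : ZMod p)) := by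
          linear_combination ((27:ZMod p)^(m-k)) * hD
      _ = 27^m * ((-1:ZMod p)^k * ((m.choose k : ℕ) : ZMod p) * (((m+k).choose k : ℕ) : ZMod p)) := by
          rw [h27]
  rw [Finset.sum_congr rfl step, ← Finset.mul_sum]
  have hid := congrArg (Int.cast : ℤ → ZMod p) (identH m)
  push_cast at hid
  rw [hid, hm.neg_one_pow]
  ring

end

theorem stmt10' (p : ℕ) (hp : p.Prime) (hp3 : 3 < p) :
    ∃ c : ℚ, (∑ k ∈ Finset.range (p / 3 + 1),
        ((3 * k).factorial : ℚ) / (27 ^ k * (k.factorial : ℚ) ^ 3))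
      - (legendreSym 3 p : ℚ) = (p : ℚ) ^ 1 * c ∧ ¬ (p ∣ c.den) := by
  haveI hfp : Fact p.Prime := ⟨hp⟩
  set m := p / 3 with hm
  have hodd : p % 2 = 1 := Nat.odd_iff.mp (hp.odd_of_ne_two (by omega))
  have hr : p % 3 = 1 ∨ p % 3 = 2 := by
    have h3 : ¬ (3 ∣ p) := by
      intro h
      rcases (Nat.Prime.eq_one_or_self_of_dvd hp 3 h) with h' | h' <;> omega
    omega
  set N : ℕ := ∑ k ∈ range (m+1), 27^(m-k) * ((3*k).choose k * (2*k).choose k) with hN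
  set ε : ℤ := legendreSym 3 (p : ℤ) with hε
  have hz : (((N : ℤ) - 27^m * ε : ℤ) : ZMod p) = 0 := by
    rcases hr with h1 | h2
    · have hpm : p = 3*m+1 := by omega
      have hmev : Even m := Nat.even_iff.mpr (by omega)
      have hε1 : ε = 1 := by
        rw [hε, legendreSym.mod, show ((p:ℤ) % (3:ℕ)) = 1 from by push_cast; omega]
        decide
      rw [hε1]
      push_cast
      rw [sum_case1 hpm hmev]
      ring
    · have hpm : p = 3*m+2 := by omega
      have hmod : Odd m := Nat.odd_iff.mpr (by omega)
      have hε1 : ε = -1 := by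
        rw [hε, legendreSym.mod, show ((p:ℤ) % (3:ℕ)) = 2 from by push_cast; omega]
        decide
      rw [hε1]
      push_cast
      rw [sum_case2 hpm hmod]
      ring
  obtain ⟨y, hy⟩ : (p : ℤ) ∣ ((N : ℤ) - 27^m * ε) :=
    (ZMod.intCast_zmod_eq_zero_iff_dvd _ p).mp hz
  refine ⟨(y : ℚ) / ((27^m : ℤ) : ℚ), ?_, ?_⟩
  · have h27 : ((27:ℚ))^m ≠ 0 := by positivity
    have hterm : ∀ k ∈ range (m+1),
        ((3 * k).factorial : ℚ) / (27 ^ k * (k.factorial : ℚ) ^ 3)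
          = ((27^(m-k) * ((3*k).choose k * (2*k).choose k) : ℕ) : ℚ) / 27^m := by
      intro k hk
      have hk' : k ≤ m := Nat.lt_succ_iff.mp (mem_range.mp hk)
      have hcc := congrArg (Nat.cast : ℕ → ℚ) (cc_fact k)
      push_cast at hcc
      have h27' : (27:ℚ)^m = 27^(m-k) * 27^k := by rw [← pow_add]; congr 1; omega
      rw [div_eq_div_iff (by positivity) (by positivity)]
      push_cast
      rw [h27']
      linear_combination (-(27:ℚ)^(m-k) * 27^k) * hcc
    have hA : (∑ k ∈ Finset.range (p / 3 + 1),
        ((3 * k).factorial : ℚ) / (27 ^ k * (k.factorial : ℚ) ^ 3)) = (N : ℚ) / 27^m := by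
      rw [show p / 3 + 1 = m + 1 from rfl]
      rw [Finset.sum_congr rfl hterm, ← Finset.sum_div, hN, Nat.cast_sum]
    rw [hA]
    have hyq := congrArg (Int.cast : ℤ → ℚ) hy
    push_cast at hyq
    rw [pow_one]
    push_cast
    field_simp
    linear_combination hyq
  · intro hd
    have hdvd : ((((y : ℚ) / ((27^m : ℤ) : ℚ)).den : ℤ)) ∣ (27^m : ℤ) := by
      rw [← Rat.divInt_eq_div]
      exact Rat.den_dvd y (27^m)
    have hp27 : (p : ℤ) ∣ (27^m : ℤ) := dvd_trans (Int.natCast_dvd_natCast.mpr hd) hdvd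
    have hp27' : p ∣ 27^m := by
      have h : ((27^m : ℕ) : ℤ) = (27^m : ℤ) := by push_cast; ring
      exact_mod_cast h ▸ hp27
    have hdd : p ∣ 3 := by
      have h27n : (27:ℕ)^m = 3^(3*m) := by
        rw [show (27:ℕ) = 3^3 from rfl, ← pow_mul]
      exact hp.dvd_of_dvd_pow (h27n ▸ hp27')
    have := Nat.le_of_dvd (by norm_num) hdd
    omega

theorem stmt10 (p : ℕ) (hp : p.Prime) (hp3 : 3 < p) :
    ratCongr p 1
      (∑ k ∈ Finset.range (p / 3 + 1),
        ((3 * k).factorial : ℚ) / (27 ^ k * (k.factorial : ℚ) ^ 3))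
      (legendreSym 3 p : ℚ) :=
  stmt10' p hp hp3
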